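/- Let U = [U_k U_c] ∈ ℝ^{m×m} and V = [V_k V_c] ∈ ℝ^{n×n} be orthogonal matrices, where U_k ∈ ℝ^{m×k} and V_k ∈ ℝ^{n×k}. Let D ∈ ℝ^{k×k} be any matrix and let M ∈ ℝ^{m×n} be any matrix, and set Θ₁ = U_k·D·V_kᵀ and M₂ = U_c·U_cᵀ·M·V_c·V_cᵀ. Then ‖Θ₁ + M₂‖_* = ‖Θ₁‖_* + ‖M₂‖_*. -/

import Mathlib

open Matrix

/-- The positive semidefinite square root `Matrix.PosSemidef.sqrt` of the older Mathlib
(removed since), spelled out with its old definition. -/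
noncomputable def Matrix.PosSemidef.sqrt {r : ℕ} {S : Matrix (Fin r) (Fin r) ℝ}
    (hS : S.PosSemidef) : Matrix (Fin r) (Fin r) ℝ :=
  hS.1.eigenvectorUnitary.1 * diagonal ((↑) ∘ (√·) ∘ hS.1.eigenvalues) *
    (star hS.1.eigenvectorUnitary : Matrix (Fin r) (Fin r) ℝ)

/-- Frobenius norm of a real matrix: `(tr(MᵀM))^{1/2}`. -/
noncomputable def frobNorm {m n : ℕ} (M : Matrix (Fin m) (Fin n) ℝ) : ℝ :=
  Real.sqrt ((Mᵀ * M).trace)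

/-- Nuclear norm of a real matrix: the trace of the positive semidefinite
square root of `MᵀM` (= sum of singular values). -/
noncomputable def nuclearNorm {m n : ℕ} (M : Matrix (Fin m) (Fin n) ℝ) : ℝ :=
  (Matrix.posSemidef_conjTranspose_mul_self M).sqrt.trace

/-- Spectral (ℓ2 → ℓ2 operator) norm of a real matrix: its largest singular value. -/
noncomputable def opNorm {m n : ℕ} (M : Matrix (Fin m) (Fin n) ℝ) : ℝ :=
  ‖LinearMap.toContinuousLinearMap (Matrix.toEuclideanLin M)‖

/-- The ℓ1 norm of the vectorization of a matrix. -/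
noncomputable def vecL1 {m n : ℕ} (M : Matrix (Fin m) (Fin n) ℝ) : ℝ :=
  ∑ i, ∑ j, |M i j|

/-- The ℓ∞ norm of the vectorization of a matrix. -/
noncomputable def vecLinf {m n : ℕ} (M : Matrix (Fin m) (Fin n) ℝ) : ℝ :=
  ⨆ i, ⨆ j, |M i j|

/-- Frobenius (trace) inner product of two matrices. -/
noncomputable def traceInner {m n : ℕ} (M N : Matrix (Fin m) (Fin n) ℝ) : ℝ :=
  (Mᵀ * N).trace

open scoped Classical in
/-- The inverse of the positive semidefinite square root of a positive semidefinite
matrix (junk value `0` if the matrix is not positive semidefinite). -/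
noncomputable def matInvSqrt {r : ℕ} (S : Matrix (Fin r) (Fin r) ℝ) :
    Matrix (Fin r) (Fin r) ℝ :=
  if h : S.PosSemidef then h.sqrt⁻¹ else 0

open scoped MatrixOrder in
lemma Matrix.PosSemidef.sqrt_eq_cfcSqrt {r : ℕ} {S : Matrix (Fin r) (Fin r) ℝ}
    (hS : S.PosSemidef) : hS.sqrt = CFC.sqrt S := by
  rw [CFC.sqrt_eq_real_sqrt S hS.nonneg, cfcₙ_eq_cfc, hS.1.cfc_eq]
  simp [Matrix.PosSemidef.sqrt, IsHermitian.cfc]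
  rfl

open scoped MatrixOrder in
lemma Matrix.PosSemidef.posSemidef_sqrt {r : ℕ} {S : Matrix (Fin r) (Fin r) ℝ}
    (hS : S.PosSemidef) : hS.sqrt.PosSemidef := by
  rw [hS.sqrt_eq_cfcSqrt]; exact (CFC.sqrt_nonneg S).posSemidef

open scoped MatrixOrder in
lemma Matrix.PosSemidef.sqrt_mul_self {r : ℕ} {S : Matrix (Fin r) (Fin r) ℝ}
    (hS : S.PosSemidef) : hS.sqrt * hS.sqrt = S := by
  rw [hS.sqrt_eq_cfcSqrt]; exact CFC.sqrt_mul_sqrt_self S hS.nonneg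

open scoped MatrixOrder in
lemma Matrix.PosSemidef.eq_sqrt_of_sq_eq {r : ℕ} {A : Matrix (Fin r) (Fin r) ℝ}
    (hA : A.PosSemidef) (B : Matrix (Fin r) (Fin r) ℝ) (hB : B.PosSemidef) (hAB : A ^ 2 = B) :
    A = hB.sqrt := by
  rw [hB.sqrt_eq_cfcSqrt]; exact (CFC.sqrt_unique (by rw [← hAB, sq]) hA.nonneg).symm

lemma sqrt_congr' {r : ℕ} {S S' : Matrix (Fin r) (Fin r) ℝ}
    (h1 : S.PosSemidef) (h2 : S'.PosSemidef) (h : S = S') : h1.sqrt = h2.sqrt := by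
  subst h; rfl

lemma sqrt_add_of_mul_eq_zero' {r : ℕ} {P Q : Matrix (Fin r) (Fin r) ℝ}
    (hP : P.PosSemidef) (hQ : Q.PosSemidef) (hPQ : P * Q = 0) :
    (hP.add hQ).sqrt = hP.sqrt + hQ.sqrt := by
  have hQP : Q * P = 0 := by
    calc Q * P = (P * Q)ᴴ := by rw [conjTranspose_mul, hP.1, hQ.1]
    _ = 0 := by rw [hPQ, conjTranspose_zero]
  set S := hP.sqrt with hS
  set T := hQ.sqrt with hT
  have hSherm : Sᴴ = S := hP.posSemidef_sqrt.1
  have hTherm : Tᴴ = T := hQ.posSemidef_sqrt.1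
  have hSS : S * S = P := hP.sqrt_mul_self
  have hTT : T * T = Q := hQ.sqrt_mul_self
  have hSQ : S * Q = 0 := by
    have : (S * Q)ᴴ * (S * Q) = 0 := by
      rw [conjTranspose_mul, hSherm, hQ.1]
      calc Q * S * (S * Q) = Q * (S * S) * Q := by noncomm_ring
      _ = 0 := by rw [hSS]; rw [show Q * P * Q = Q * P * Q from rfl, hQP, Matrix.zero_mul]
    exact conjTranspose_mul_self_eq_zero.mp this
  have hST : S * T = 0 := by
    have : (S * T) * (S * T)ᴴ = 0 := by
      rw [conjTranspose_mul, hSherm, hTherm]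
      calc S * T * (T * S) = S * (T * T) * S := by noncomm_ring
      _ = 0 := by rw [hTT, hSQ, Matrix.zero_mul]
    exact self_mul_conjTranspose_eq_zero.mp this
  have hTS : T * S = 0 := by
    calc T * S = (S * T)ᴴ := by rw [conjTranspose_mul, hSherm, hTherm]
    _ = 0 := by rw [hST, conjTranspose_zero]
  symm
  apply Matrix.PosSemidef.eq_sqrt_of_sq_eq (hP.posSemidef_sqrt.add hQ.posSemidef_sqrt)
  rw [pow_two]
  calc (S + T) * (S + T) = S * S + S * T + T * S + T * T := by noncomm_ring
  _ = P + Q := by rw [hSS, hTT, hST, hTS]; simp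

/-- Lemma A2: additivity of the nuclear norm across the block decomposition
induced by the singular value decomposition of a rank-k matrix. -/
theorem stmt_3
    (m n k : ℕ)
    (Uk : Matrix (Fin m) (Fin k) ℝ) (Uc : Matrix (Fin m) (Fin (m - k)) ℝ)
    (Vk : Matrix (Fin n) (Fin k) ℝ) (Vc : Matrix (Fin n) (Fin (n - k)) ℝ)
    (hUk : Ukᵀ * Uk = 1) (hUc : Ucᵀ * Uc = 1) (hUkc : Ukᵀ * Uc = 0)
    (hUfull : Uk * Ukᵀ + Uc * Ucᵀ = 1)
    (hVk : Vkᵀ * Vk = 1) (hVc : Vcᵀ * Vc = 1) (hVkc : Vkᵀ * Vc = 0)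
    (hVfull : Vk * Vkᵀ + Vc * Vcᵀ = 1)
    (D : Matrix (Fin k) (Fin k) ℝ) (M : Matrix (Fin m) (Fin n) ℝ) :
    nuclearNorm (Uk * D * Vkᵀ + Uc * Ucᵀ * M * Vc * Vcᵀ)
      = nuclearNorm (Uk * D * Vkᵀ) + nuclearNorm (Uc * Ucᵀ * M * Vc * Vcᵀ) := by
  set A := Uk * D * Vkᵀ with hA
  set B := Uc * Ucᵀ * M * Vc * Vcᵀ with hB
  have hP := Matrix.posSemidef_conjTranspose_mul_self A
  have hQ := Matrix.posSemidef_conjTranspose_mul_self B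
  have hAtB : Aᴴ * B = 0 := by
    simp only [hA, hB, conjTranspose_eq_transpose_of_trivial, transpose_mul,
      transpose_transpose]
    simp only [Matrix.mul_assoc]
    rw [← Matrix.mul_assoc Ukᵀ Uc, hUkc]
    simp
  have hABt : A * Bᴴ = 0 := by
    simp only [hA, hB, conjTranspose_eq_transpose_of_trivial, transpose_mul,
      transpose_transpose]
    simp only [Matrix.mul_assoc]
    rw [← Matrix.mul_assoc Vkᵀ Vc, hVkc]
    simp
  have hUck : Ucᵀ * Uk = 0 := by
    have := congrArg transpose hUkc
    simpa [transpose_mul] using this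
  have hBtA : Bᴴ * A = 0 := by
    simp only [hA, hB, conjTranspose_eq_transpose_of_trivial, transpose_mul,
      transpose_transpose]
    simp only [Matrix.mul_assoc]
    rw [← Matrix.mul_assoc Ucᵀ Uk, hUck]
    simp
  have hPQ : (Aᴴ * A) * (Bᴴ * B) = 0 := by
    rw [Matrix.mul_assoc, ← Matrix.mul_assoc A Bᴴ B, hABt, Matrix.zero_mul, Matrix.mul_zero]
  have hsum : (A + B)ᴴ * (A + B) = Aᴴ * A + Bᴴ * B := by
    rw [conjTranspose_add, Matrix.add_mul, Matrix.mul_add, Matrix.mul_add, hAtB, hBtA]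
    simp
  show (Matrix.posSemidef_conjTranspose_mul_self (A + B)).sqrt.trace
      = (Matrix.posSemidef_conjTranspose_mul_self A).sqrt.trace
        + (Matrix.posSemidef_conjTranspose_mul_self B).sqrt.trace
  rw [sqrt_congr' (Matrix.posSemidef_conjTranspose_mul_self (A + B)) (hP.add hQ) hsum,
    sqrt_add_of_mul_eq_zero' hP hQ hPQ, Matrix.trace_add]
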